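/- Let A be a strictly positive operator on H and T ∈ B_A(H) with T³ = 0. Then w_A(T)³ = (1/4)·w_A(T²T^{♯A} + T^{♯A}T² + TT^{♯A}T). -/

import Mathlib

noncomputable section
open Complex ContinuousLinearMap

variable {H : Type*} [NormedAddCommGroup H] [InnerProductSpace ℂ H] [CompleteSpace H]

/-- The `A`-inner product `⟨x,y⟩_A = ⟨Ax,y⟩`. -/
def innA (A : H →L[ℂ] H) (x y : H) : ℂ := inner ℂ (A x) y

/-- The `A`-seminorm of a vector, `‖x‖_A = √⟨x,x⟩_A`. -/
def vnormA (A : H →L[ℂ] H) (x : H) : ℝ := Real.sqrt (innA A x x).re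

/-- The `A`-numerical radius `w_A(T) = sup{|⟨Tx,x⟩_A| : ‖x‖_A = 1}`. -/
def wA (A T : H →L[ℂ] H) : ℝ :=
  sSup {r : ℝ | ∃ x : H, vnormA A x = 1 ∧ r = ‖innA A (T x) x‖}

/-- The `A`-operator seminorm, `sup` over `A`-unit vectors in the closure of the range of `A`. -/
def opNormA (A T : H →L[ℂ] H) : ℝ :=
  sSup {r : ℝ | ∃ x : H, x ∈ closure (Set.range A) ∧ vnormA A x = 1 ∧ r = vnormA A (T x)}

/-- The `A`-operator seminorm, `sup` over all `A`-unit vectors (used when `A > 0`). -/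
def opNormA' (A T : H →L[ℂ] H) : ℝ :=
  sSup {r : ℝ | ∃ x : H, vnormA A x = 1 ∧ r = vnormA A (T x)}

/-- The `A`-Crawford number `c_A(T) = inf{|⟨Tx,x⟩_A| : ‖x‖_A = 1}`. -/
def cA (A T : H →L[ℂ] H) : ℝ :=
  sInf {r : ℝ | ∃ x : H, vnormA A x = 1 ∧ r = ‖innA A (T x) x‖}

/-- The `A`-minimum modulus `m_A(T) = inf{‖Tx‖_A : ‖x‖_A = 1}` (version for `A > 0`). -/
def mA (A T : H →L[ℂ] H) : ℝ :=
  sInf {r : ℝ | ∃ x : H, vnormA A x = 1 ∧ r = vnormA A (T x)}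

/-- `S` is an `A`-adjoint of `T`, i.e. `A S = T* A`. -/
def IsAAdjoint (A T S : H →L[ℂ] H) : Prop :=
  A.comp S = (ContinuousLinearMap.adjoint T).comp A

/-- `A` is strictly positive: positive and `⟨Ax,x⟩ > 0` for all `x ≠ 0`. -/
def StrictPos (A : H →L[ℂ] H) : Prop :=
  A.IsPositive ∧ ∀ x : H, x ≠ 0 → 0 < (innA A x x).re

/-- The inner product on `H ⊕ H`. -/
def inn2 (u v : H × H) : ℂ := inner ℂ u.1 v.1 + inner ℂ u.2 v.2

/-- `B = diag(A, A)` acting on `H ⊕ H`. -/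
def Bop (A : H →L[ℂ] H) : H × H →L[ℂ] H × H := A.prodMap A

/-- The `B`-seminorm on `H ⊕ H`. -/
def vnormB (A : H →L[ℂ] H) (u : H × H) : ℝ := Real.sqrt (inn2 (Bop A u) u).re

/-- The `B`-numerical radius on `H ⊕ H`, where `B = diag(A, A)`. -/
def wB (A : H →L[ℂ] H) (S : H × H →L[ℂ] H × H) : ℝ :=
  sSup {r : ℝ | ∃ u : H × H, vnormB A u = 1 ∧ r = ‖inn2 (Bop A (S u)) u‖}

/-- The `2 × 2` operator matrix `[[X, Y], [Z, W]]` acting on `H ⊕ H`. -/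
def blk (X Y Z W : H →L[ℂ] H) : H × H →L[ℂ] H × H :=
  ((X.comp (ContinuousLinearMap.fst ℂ H H)) + (Y.comp (ContinuousLinearMap.snd ℂ H H))).prod
    ((Z.comp (ContinuousLinearMap.fst ℂ H H)) + (W.comp (ContinuousLinearMap.snd ℂ H H)))

open ComplexConjugate
set_option linter.unusedSectionVars false
set_option maxHeartbeats 1000000

section Aux
variable (A : H →L[ℂ] H)

lemma innA_add_left (x y z : H) : innA A (x + y) z = innA A x z + innA A y z := by
  simp [innA, inner_add_left]

lemma innA_add_right (x y z : H) : innA A x (y + z) = innA A x y + innA A x z := by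
  simp [innA, inner_add_right]

lemma innA_sub_left (x y z : H) : innA A (x - y) z = innA A x z - innA A y z := by
  simp [innA, inner_sub_left]

lemma innA_sub_right (x y z : H) : innA A x (y - z) = innA A x y - innA A x z := by
  simp [innA, inner_sub_right]

lemma innA_smul_left (c : ℂ) (x y : H) : innA A (c • x) y = conj c * innA A x y := by
  simp [innA, inner_smul_left]; ring

lemma innA_smul_right (c : ℂ) (x y : H) : innA A x (c • y) = c * innA A x y := by
  simp [innA, inner_smul_right]

lemma innA_zero_right (x : H) : innA A x 0 = 0 := by simp [innA]

lemma innA_zero_left (x : H) : innA A 0 x = 0 := by simp [innA]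

variable {A}

lemma innA_conj (hsa : ContinuousLinearMap.adjoint A = A) (x y : H) :
    conj (innA A x y) = innA A y x := by
  simp only [innA]
  conv_lhs => rw [← hsa]
  rw [adjoint_inner_left, inner_conj_symm]

lemma innA_self_re_nonneg (hA : StrictPos A) (x : H) : 0 ≤ (innA A x x).re := by
  have h := hA.1.2 x
  simpa [ContinuousLinearMap.reApplyInnerSelf, innA] using h

/-- The pre-inner-product core given by `innA`. -/
def coreA (hA : StrictPos A) : PreInnerProductSpace.Core ℂ H where
  inner x y := innA A x y
  conj_inner_symm x y := innA_conj hA.1.isSelfAdjoint.adjoint_eq y x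
  re_inner_nonneg x := by simpa using innA_self_re_nonneg hA x
  add_left x y z := innA_add_left A x y z
  smul_left x y r := innA_smul_left A r x y

lemma vnormA_nonneg (x : H) : 0 ≤ vnormA A x := Real.sqrt_nonneg _

lemma vnormA_sq (hA : StrictPos A) (x : H) : vnormA A x ^ 2 = (innA A x x).re :=
  Real.sq_sqrt (innA_self_re_nonneg hA x)

lemma innA_abs_le (hA : StrictPos A) (x y : H) :
    ‖innA A x y‖ ≤ vnormA A x * vnormA A y := by
  have key := @InnerProductSpace.Core.inner_mul_inner_self_le ℂ H _ _ _ (coreA hA) x y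
  have key2 : ‖innA A x y‖ * ‖innA A y x‖ ≤ (innA A x x).re * (innA A y y).re := key
  have hsym : ‖innA A y x‖ = ‖innA A x y‖ := by
    rw [← innA_conj hA.1.isSelfAdjoint.adjoint_eq x y]; simp
  rw [hsym] at key2
  have h1 : ‖innA A x y‖ ^ 2 ≤ (vnormA A x * vnormA A y) ^ 2 := by
    rw [mul_pow, vnormA_sq hA, vnormA_sq hA, sq]
    exact key2
  exact le_of_pow_le_pow_left₀ two_ne_zero
    (mul_nonneg (vnormA_nonneg x) (vnormA_nonneg y)) h1

end Aux

section Aux2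
variable {A : H →L[ℂ] H}

lemma vnormA_smul (c : ℂ) (x : H) : vnormA A (c • x) = ‖c‖ * vnormA A x := by
  unfold vnormA
  rw [innA_smul_left, innA_smul_right, ← mul_assoc, ← Complex.normSq_eq_conj_mul_self]
  have hre : ((Complex.normSq c : ℂ) * innA A x x).re = Complex.normSq c * (innA A x x).re := by
    simp
  rw [hre, Real.sqrt_mul (Complex.normSq_nonneg c), ← Complex.norm_def]

lemma vnormA_zero : vnormA A (0 : H) = 0 := by simp [vnormA, innA]

lemma vnormA_pos (hA : StrictPos A) {x : H} (hx : x ≠ 0) : 0 < vnormA A x :=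
  Real.sqrt_pos.2 (hA.2 x hx)

lemma vnormA_le_norm (hA : StrictPos A) (x : H) :
    vnormA A x ≤ Real.sqrt ‖A‖ * ‖x‖ := by
  have h1 : (innA A x x).re ≤ ‖A‖ * (‖x‖ * ‖x‖) := by
    calc (innA A x x).re ≤ ‖innA A x x‖ := Complex.re_le_norm _
      _ = ‖innA A x x‖ := rfl
      _ ≤ ‖A x‖ * ‖x‖ := norm_inner_le_norm _ _
      _ ≤ (‖A‖ * ‖x‖) * ‖x‖ := by
          exact mul_le_mul_of_nonneg_right (A.le_opNorm x) (norm_nonneg x)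
      _ = ‖A‖ * (‖x‖ * ‖x‖) := by ring
  calc vnormA A x = Real.sqrt (innA A x x).re := rfl
    _ ≤ Real.sqrt (‖A‖ * (‖x‖ * ‖x‖)) := Real.sqrt_le_sqrt h1
    _ = Real.sqrt ‖A‖ * ‖x‖ := by
        rw [Real.sqrt_mul (norm_nonneg A), Real.sqrt_mul_self (norm_nonneg x)]

/-- The fundamental shift identity. -/
lemma innA_shift {V W : H →L[ℂ] H} (hW : A * W = ContinuousLinearMap.adjoint V * A)
    (x y : H) : innA A (W x) y = innA A x (V y) := by
  have h : A (W x) = ContinuousLinearMap.adjoint V (A x) := by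
    have h0 := DFunLike.congr_fun hW x
    simpa [ContinuousLinearMap.mul_apply] using h0
  show inner ℂ (A (W x)) y = inner ℂ (A x) (V y)
  rw [h, adjoint_inner_left]

lemma adj_inn (hsa : ContinuousLinearMap.adjoint A = A)
    {V W : H →L[ℂ] H} (hW : A * W = ContinuousLinearMap.adjoint V * A) (x : H) :
    innA A (W x) x = conj (innA A (V x) x) := by
  rw [innA_shift hW x x, ← innA_conj hsa]

lemma seven (hA : StrictPos A) {V W : H →L[ℂ] H}
    (hW : A * W = ContinuousLinearMap.adjoint V * A) (x : H) :
    vnormA A (V x) ^ 2 ≤ vnormA A ((W * V) x) * vnormA A x := by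
  have h1 : innA A ((W * V) x) x = innA A (V x) (V x) := by
    rw [ContinuousLinearMap.mul_apply, innA_shift hW (V x) x]
  calc vnormA A (V x) ^ 2 = (innA A (V x) (V x)).re := vnormA_sq hA _
    _ = (innA A ((W * V) x) x).re := by rw [h1]
    _ ≤ ‖innA A ((W * V) x) x‖ := Complex.re_le_norm _
    _ ≤ vnormA A ((W * V) x) * vnormA A x := innA_abs_le hA _ _

lemma sa_mul_adjoint (hsa : ContinuousLinearMap.adjoint A = A) {V W : H →L[ℂ] H}
    (hW : A * W = ContinuousLinearMap.adjoint V * A) :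
    A * (W * V) = ContinuousLinearMap.adjoint (W * V) * A := by
  have hW' : ContinuousLinearMap.adjoint W * A = A * V := by
    have h := congrArg star hW
    simp only [star_mul, star_eq_adjoint, hsa, adjoint_adjoint] at h
    exact h
  calc A * (W * V) = (A * W) * V := by rw [mul_assoc]
    _ = (ContinuousLinearMap.adjoint V * A) * V := by rw [hW]
    _ = ContinuousLinearMap.adjoint V * (ContinuousLinearMap.adjoint W * A) := by
        rw [mul_assoc, hW']
    _ = (ContinuousLinearMap.adjoint V * ContinuousLinearMap.adjoint W) * A := by
        rw [mul_assoc]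
    _ = ContinuousLinearMap.adjoint (W * V) * A := by
        rw [← star_eq_adjoint, ← star_eq_adjoint, ← star_eq_adjoint, ← star_mul]

lemma sa_pow {M : H →L[ℂ] H} (hM : A * M = ContinuousLinearMap.adjoint M * A) (k : ℕ) :
    A * (M ^ k) = ContinuousLinearMap.adjoint (M ^ k) * A := by
  induction k with
  | zero => simp [← star_eq_adjoint]
  | succ n ih =>
      have hstar : ContinuousLinearMap.adjoint (M ^ (n + 1))
          = ContinuousLinearMap.adjoint (M ^ n) * ContinuousLinearMap.adjoint M := by
        simp only [← star_eq_adjoint, star_pow]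
        exact pow_succ _ _
      rw [hstar, pow_succ, ← mul_assoc, ih, mul_assoc, hM, ← mul_assoc]

/-- Key seminorm bound for `A`-selfadjoint operators. -/
lemma sa_norm_bound (hA : StrictPos A) {M : H →L[ℂ] H}
    (hM : A * M = ContinuousLinearMap.adjoint M * A) (x : H) :
    vnormA A (M x) ≤ ‖M‖ * vnormA A x := by
  rcases eq_or_ne x 0 with rfl | hx
  · simp [vnormA_zero]
  rcases eq_or_ne M 0 with rfl | hM0
  · simp [vnormA_zero]
  set a := vnormA A x with ha_def
  have ha : 0 < a := vnormA_pos hA hx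
  by_contra hcon
  push_neg at hcon
  set b := vnormA A (M x) with hb_def
  have hMn : 0 < ‖M‖ := norm_pos_iff.2 hM0
  have he : 0 < ‖M‖ * a := mul_pos hMn ha
  -- claim2 : b ^ (2^m) * a ≤ vnormA A ((M ^ (2^m)) x) * a ^ (2^m)
  have claim2 : ∀ m : ℕ, b ^ (2 ^ m) * a ≤ vnormA A ((M ^ (2 ^ m)) x) * a ^ (2 ^ m) := by
    intro m
    induction m with
    | zero => simp [pow_one, hb_def]
    | succ n ih =>
        have hsev := seven hA (sa_pow hM (2 ^ n)) x
        have hpowpow : (M ^ (2 ^ n)) * (M ^ (2 ^ n)) = M ^ (2 ^ (n + 1)) := by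
          rw [← pow_add]; congr 1; rw [pow_succ]; ring
        rw [hpowpow] at hsev
        have h1 : (b ^ (2 ^ n) * a) ^ 2 ≤ (vnormA A ((M ^ (2 ^ n)) x) * a ^ (2 ^ n)) ^ 2 := by
          exact pow_le_pow_left₀ (mul_nonneg (pow_nonneg (vnormA_nonneg _) _) ha.le) ih 2
        have h2 : (vnormA A ((M ^ (2 ^ n)) x)) ^ 2
            ≤ vnormA A ((M ^ (2 ^ (n+1))) x) * a := hsev
        have hstep : b ^ (2 ^ (n+1)) * a * a
            ≤ (vnormA A ((M ^ (2 ^ (n+1))) x) * a ^ (2 ^ (n+1))) * a := by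
          have e1 : (b ^ (2 ^ n) * a) ^ 2 = b ^ (2 ^ (n+1)) * a * a := by
            rw [mul_pow, ← pow_mul]
            have : 2 ^ n * 2 = 2 ^ (n + 1) := by rw [pow_succ]
            rw [this]; ring
          have e2 : (vnormA A ((M ^ (2 ^ n)) x) * a ^ (2 ^ n)) ^ 2
              = (vnormA A ((M ^ (2 ^ n)) x)) ^ 2 * (a ^ (2 ^ n)) ^ 2 := by ring
          rw [e1] at h1
          calc b ^ (2 ^ (n+1)) * a * a ≤ (vnormA A ((M ^ (2 ^ n)) x) * a ^ (2 ^ n)) ^ 2 := h1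
            _ = (vnormA A ((M ^ (2 ^ n)) x)) ^ 2 * (a ^ (2 ^ n)) ^ 2 := e2
            _ ≤ (vnormA A ((M ^ (2 ^ (n+1))) x) * a) * (a ^ (2 ^ n)) ^ 2 := by
                apply mul_le_mul_of_nonneg_right h2 (by positivity)
            _ = (vnormA A ((M ^ (2 ^ (n+1))) x) * a ^ (2 ^ (n+1))) * a := by
                rw [← pow_mul, show 2 ^ n * 2 = 2 ^ (n + 1) from by rw [pow_succ]]
                ring
        exact le_of_mul_le_mul_right hstep ha
  -- combine with the crude norm bound
  have crude : ∀ m : ℕ, vnormA A ((M ^ (2 ^ m)) x) ≤ Real.sqrt ‖A‖ * ‖x‖ * ‖M‖ ^ (2 ^ m) := by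
    intro m
    calc vnormA A ((M ^ (2 ^ m)) x) ≤ Real.sqrt ‖A‖ * ‖(M ^ (2 ^ m)) x‖ :=
          vnormA_le_norm hA _
      _ ≤ Real.sqrt ‖A‖ * (‖M ^ (2 ^ m)‖ * ‖x‖) := by
          apply mul_le_mul_of_nonneg_left ((M ^ (2 ^ m)).le_opNorm x) (Real.sqrt_nonneg _)
      _ ≤ Real.sqrt ‖A‖ * (‖M‖ ^ (2 ^ m) * ‖x‖) := by
          apply mul_le_mul_of_nonneg_left _ (Real.sqrt_nonneg _)
          apply mul_le_mul_of_nonneg_right (norm_pow_le' M (by positivity)) (norm_nonneg x)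
      _ = Real.sqrt ‖A‖ * ‖x‖ * ‖M‖ ^ (2 ^ m) := by ring
  set K := Real.sqrt ‖A‖ * ‖x‖ with hK_def
  have hq : 1 < b / (‖M‖ * a) := by
    rw [lt_div_iff₀ he]; simpa using hcon
  have hqle : ∀ m : ℕ, (b / (‖M‖ * a)) ^ m ≤ K / a := by
    intro m
    have h1 : b ^ (2 ^ m) * a ≤ K * (‖M‖ * a) ^ (2 ^ m) := by
      calc b ^ (2 ^ m) * a ≤ vnormA A ((M ^ (2 ^ m)) x) * a ^ (2 ^ m) := claim2 m
        _ ≤ (K * ‖M‖ ^ (2 ^ m)) * a ^ (2 ^ m) := by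
            apply mul_le_mul_of_nonneg_right (crude m) (by positivity)
        _ = K * (‖M‖ * a) ^ (2 ^ m) := by rw [mul_pow]; ring
    have h2 : (b / (‖M‖ * a)) ^ (2 ^ m) ≤ K / a := by
      rw [div_pow, div_le_div_iff₀ (pow_pos he _) ha]
      exact h1
    calc (b / (‖M‖ * a)) ^ m ≤ (b / (‖M‖ * a)) ^ (2 ^ m) :=
          pow_le_pow_right₀ hq.le (Nat.le_of_lt (Nat.lt_two_pow_self))
      _ ≤ K / a := h2
  obtain ⟨m, hm⟩ := ((tendsto_pow_atTop_atTop_of_one_lt hq).eventually_gt_atTop (K / a)).exists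
  exact absurd (hqle m) (not_le.2 hm)

end Aux2

section Aux3
variable {A : H →L[ℂ] H}

lemma wA_nonneg (V : H →L[ℂ] H) : 0 ≤ wA A V := by
  apply Real.sSup_nonneg
  rintro r ⟨x, hx, rfl⟩
  exact norm_nonneg _

lemma opN_nonneg (V : H →L[ℂ] H) : 0 ≤ opNormA' A V := by
  apply Real.sSup_nonneg
  rintro r ⟨x, hx, rfl⟩
  exact vnormA_nonneg _

lemma wA_le (V : H →L[ℂ] H) {C : ℝ} (hC : 0 ≤ C)
    (h : ∀ x : H, vnormA A x = 1 → ‖innA A (V x) x‖ ≤ C) : wA A V ≤ C := by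
  apply Real.sSup_le _ hC
  rintro r ⟨x, hx, rfl⟩
  exact h x hx

lemma opN_le (V : H →L[ℂ] H) {C : ℝ} (hC : 0 ≤ C)
    (h : ∀ x : H, vnormA A x = 1 → vnormA A (V x) ≤ C) : opNormA' A V ≤ C := by
  apply Real.sSup_le _ hC
  rintro r ⟨x, hx, rfl⟩
  exact h x hx

/-- Seminorm bound for operators admitting an `A`-adjoint. -/
lemma vnorm_apply_le (hA : StrictPos A) {V W : H →L[ℂ] H}
    (hW : A * W = ContinuousLinearMap.adjoint V * A) (x : H) :
    vnormA A (V x) ≤ Real.sqrt ‖W * V‖ * vnormA A x := by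
  have h7 := seven hA hW x
  have h9 := sa_norm_bound hA (sa_mul_adjoint hA.1.isSelfAdjoint.adjoint_eq hW) x
  have hb : (0:ℝ) ≤ Real.sqrt ‖W * V‖ * vnormA A x :=
    mul_nonneg (Real.sqrt_nonneg _) (vnormA_nonneg _)
  have h1 : vnormA A (V x) ^ 2 ≤ (Real.sqrt ‖W * V‖ * vnormA A x) ^ 2 := by
    rw [mul_pow, Real.sq_sqrt (norm_nonneg _)]
    calc vnormA A (V x) ^ 2 ≤ vnormA A ((W * V) x) * vnormA A x := h7
      _ ≤ (‖W * V‖ * vnormA A x) * vnormA A x :=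
          mul_le_mul_of_nonneg_right h9 (vnormA_nonneg _)
      _ = ‖W * V‖ * vnormA A x ^ 2 := by ring
  exact le_of_pow_le_pow_left₀ two_ne_zero hb h1

lemma wA_bddAbove (hA : StrictPos A) {V W : H →L[ℂ] H}
    (hW : A * W = ContinuousLinearMap.adjoint V * A) :
    BddAbove {r : ℝ | ∃ x : H, vnormA A x = 1 ∧ r = ‖innA A (V x) x‖} := by
  refine ⟨Real.sqrt ‖W * V‖, ?_⟩
  rintro r ⟨x, hx, rfl⟩
  calc ‖innA A (V x) x‖ ≤ vnormA A (V x) * vnormA A x := innA_abs_le hA _ _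
    _ ≤ (Real.sqrt ‖W * V‖ * vnormA A x) * vnormA A x :=
        mul_le_mul_of_nonneg_right (vnorm_apply_le hA hW x) (vnormA_nonneg _)
    _ = Real.sqrt ‖W * V‖ := by rw [hx]; ring

lemma abs_le_wA (hA : StrictPos A) {V W : H →L[ℂ] H}
    (hW : A * W = ContinuousLinearMap.adjoint V * A) {x : H} (hx : vnormA A x = 1) :
    ‖innA A (V x) x‖ ≤ wA A V :=
  le_csSup (wA_bddAbove hA hW) ⟨x, hx, rfl⟩

lemma opN_bddAbove (hA : StrictPos A) {V W : H →L[ℂ] H}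
    (hW : A * W = ContinuousLinearMap.adjoint V * A) :
    BddAbove {r : ℝ | ∃ x : H, vnormA A x = 1 ∧ r = vnormA A (V x)} := by
  refine ⟨Real.sqrt ‖W * V‖, ?_⟩
  rintro r ⟨x, hx, rfl⟩
  calc vnormA A (V x) ≤ Real.sqrt ‖W * V‖ * vnormA A x := vnorm_apply_le hA hW x
    _ = Real.sqrt ‖W * V‖ := by rw [hx, mul_one]

lemma vnorm_le_opN (hA : StrictPos A) {V W : H →L[ℂ] H}
    (hW : A * W = ContinuousLinearMap.adjoint V * A) {x : H} (hx : vnormA A x = 1) :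
    vnormA A (V x) ≤ opNormA' A V :=
  le_csSup (opN_bddAbove hA hW) ⟨x, hx, rfl⟩

/-- unit rescaling -/
lemma unit_scale (hA : StrictPos A) {x : H} (hx : x ≠ 0) :
    vnormA A ((((vnormA A x)⁻¹ : ℝ) : ℂ) • x) = 1 := by
  rw [vnormA_smul]
  have h := vnormA_pos hA hx
  rw [Complex.norm_real, Real.norm_eq_abs, _root_.abs_of_nonneg (inv_nonneg.2 h.le)]
  field_simp

/-- pointwise operator bound via `opNormA'`, scaled version. -/
lemma vnorm_le_opN' (hA : StrictPos A) {V W : H →L[ℂ] H}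
    (hW : A * W = ContinuousLinearMap.adjoint V * A) (x : H) :
    vnormA A (V x) ≤ opNormA' A V * vnormA A x := by
  rcases eq_or_ne x 0 with rfl | hx
  · simp [vnormA_zero]
  have ht := vnormA_pos hA hx
  set u := (((vnormA A x)⁻¹ : ℝ) : ℂ) • x with hu_def
  have hu : vnormA A u = 1 := unit_scale hA hx
  have h1 : vnormA A (V u) ≤ opNormA' A V := vnorm_le_opN hA hW hu
  have h2 : vnormA A (V u) = (vnormA A x)⁻¹ * vnormA A (V x) := by
    rw [hu_def, map_smul, vnormA_smul, Complex.norm_real, Real.norm_eq_abs, _root_.abs_of_nonneg (inv_nonneg.2 ht.le)]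
  rw [h2] at h1
  calc vnormA A (V x) = ((vnormA A x)⁻¹ * vnormA A (V x)) * vnormA A x := by field_simp
    _ ≤ opNormA' A V * vnormA A x := mul_le_mul_of_nonneg_right h1 ht.le

/-- scaled numerical radius bound. -/
lemma abs_le_wA' (hA : StrictPos A) {V W : H →L[ℂ] H}
    (hW : A * W = ContinuousLinearMap.adjoint V * A) (x : H) :
    ‖innA A (V x) x‖ ≤ wA A V * vnormA A x ^ 2 := by
  rcases eq_or_ne x 0 with rfl | hx
  · simp [innA_zero_right, vnormA_zero]
  have ht := vnormA_pos hA hx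
  set t := vnormA A x with ht_def
  set u := ((t⁻¹ : ℝ) : ℂ) • x with hu_def
  have hu : vnormA A u = 1 := unit_scale hA hx
  have h1 : ‖innA A (V u) u‖ ≤ wA A V := abs_le_wA hA hW hu
  have h2 : innA A (V u) u = ((t⁻¹ : ℝ) : ℂ) * (((t⁻¹ : ℝ) : ℂ) * innA A (V x) x) := by
    rw [hu_def, map_smul, innA_smul_left, innA_smul_right, Complex.conj_ofReal]
  rw [h2] at h1
  simp only [norm_mul, Complex.norm_real, Real.norm_eq_abs, _root_.abs_of_nonneg (inv_nonneg.2 ht.le)] at h1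
  have h3 : t⁻¹ * (t⁻¹ * ‖innA A (V x) x‖) * t ^ 2 ≤ wA A V * t ^ 2 :=
    mul_le_mul_of_nonneg_right h1 (by positivity)
  calc ‖innA A (V x) x‖
      = t⁻¹ * (t⁻¹ * ‖innA A (V x) x‖) * t ^ 2 := by
        field_simp
    _ ≤ wA A V * t ^ 2 := h3

end Aux3

section Aux4
variable {A : H →L[ℂ] H}

lemma wA_eq_opN (hA : StrictPos A) {M : H →L[ℂ] H}
    (hM : A * M = ContinuousLinearMap.adjoint M * A) :
    wA A M = opNormA' A M := by
  have hsa := hA.1.isSelfAdjoint.adjoint_eq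
  apply le_antisymm
  · apply wA_le M (opN_nonneg M)
    intro x hx
    calc ‖innA A (M x) x‖ ≤ vnormA A (M x) * vnormA A x := innA_abs_le hA _ _
      _ = vnormA A (M x) := by rw [hx, mul_one]
      _ ≤ opNormA' A M := vnorm_le_opN hA hM hx
  · apply opN_le M (wA_nonneg M)
    intro x hx
    set t := vnormA A (M x) with ht_def
    rcases eq_or_lt_of_le (vnormA_nonneg (M x) : (0:ℝ) ≤ t) with h0 | ht
    · rw [ht_def, ← h0]; exact wA_nonneg M
    set y := ((t⁻¹ : ℝ) : ℂ) • (M x) with hy_def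
    have hy : vnormA A y = 1 := by
      rw [hy_def, vnormA_smul, Complex.norm_real, Real.norm_eq_abs, _root_.abs_of_nonneg (inv_nonneg.2 ht.le)]
      field_simp
    -- the polarization identity
    have hMyx : innA A (M y) x = conj (innA A (M x) y) := by
      have e1 : innA A (M y) x = innA A y (M x) := innA_shift hM y x
      rw [e1, ← innA_conj hsa]
    have hid : (innA A (M (x + y)) (x + y)).re - (innA A (M (x - y)) (x - y)).re
        = 4 * (innA A (M x) y).re := by
      have e : innA A (M (x + y)) (x + y) - innA A (M (x - y)) (x - y)
          = (innA A (M x) y + conj (innA A (M x) y))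
            + (innA A (M x) y + conj (innA A (M x) y)) := by
        simp only [map_add, map_sub, innA_add_left, innA_add_right, innA_sub_left,
          innA_sub_right, hMyx]
        ring
      have e2 := congrArg Complex.re e
      simp only [Complex.sub_re, Complex.add_re, Complex.conj_re] at e2
      linarith [e2]
    have hb1 := abs_le_wA' hA hM (x + y)
    have hb2 := abs_le_wA' hA hM (x - y)
    have hpar : vnormA A (x + y) ^ 2 + vnormA A (x - y) ^ 2
        = 2 * (vnormA A x ^ 2 + vnormA A y ^ 2) := by
      rw [vnormA_sq hA, vnormA_sq hA, vnormA_sq hA, vnormA_sq hA]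
      have e : innA A (x + y) (x + y) + innA A (x - y) (x - y)
          = (innA A x x + innA A x x) + (innA A y y + innA A y y) := by
        simp only [innA_add_left, innA_add_right, innA_sub_left, innA_sub_right]
        ring
      have e2 := congrArg Complex.re e
      simp only [Complex.add_re] at e2
      linarith [e2]
    have hre : (innA A (M x) y).re = t := by
      rw [hy_def, innA_smul_right]
      have : (innA A (M x) (M x)).re = t ^ 2 := by rw [← vnormA_sq hA]
      simp only [Complex.mul_re, Complex.ofReal_re, Complex.ofReal_im]
      rw [this]
      field_simp
      ring
    have hfin : 4 * t ≤ 4 * wA A M := by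
      calc 4 * t = 4 * (innA A (M x) y).re := by rw [hre]
        _ = (innA A (M (x + y)) (x + y)).re - (innA A (M (x - y)) (x - y)).re := hid.symm
        _ ≤ ‖innA A (M (x + y)) (x + y)‖
            + ‖innA A (M (x - y)) (x - y)‖ := by
            have g1 := Complex.re_le_norm (innA A (M (x + y)) (x + y))
            have g2 := Complex.abs_re_le_norm (innA A (M (x - y)) (x - y))
            have g3 := neg_abs_le ((innA A (M (x - y)) (x - y)).re)
            have g4 := abs_le.1 g2
            linarith [g4.1, g4.2]
        _ ≤ wA A M * vnormA A (x + y) ^ 2 + wA A M * vnormA A (x - y) ^ 2 := by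
            linarith [hb1, hb2]
        _ = wA A M * (vnormA A (x + y) ^ 2 + vnormA A (x - y) ^ 2) := by ring
        _ = wA A M * (2 * (vnormA A x ^ 2 + vnormA A y ^ 2)) := by rw [hpar]
        _ = 4 * wA A M := by rw [hx, hy]; ring
    linarith

lemma opN_sq (hA : StrictPos A) {M : H →L[ℂ] H}
    (hM : A * M = ContinuousLinearMap.adjoint M * A) :
    opNormA' A (M * M) = opNormA' A M ^ 2 := by
  apply le_antisymm
  · apply opN_le _ (by positivity)
    intro x hx
    calc vnormA A ((M * M) x) = vnormA A (M (M x)) := by rw [ContinuousLinearMap.mul_apply]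
      _ ≤ opNormA' A M * vnormA A (M x) := vnorm_le_opN' hA hM _
      _ ≤ opNormA' A M * (opNormA' A M * vnormA A x) :=
          mul_le_mul_of_nonneg_left (vnorm_le_opN' hA hM x) (opN_nonneg M)
      _ = opNormA' A M ^ 2 := by rw [hx]; ring
  · have h1 : opNormA' A M ≤ Real.sqrt (opNormA' A (M * M)) := by
      apply opN_le _ (Real.sqrt_nonneg _)
      intro x hx
      rw [Real.le_sqrt (vnormA_nonneg _)]
      · calc vnormA A (M x) ^ 2 ≤ vnormA A ((M * M) x) * vnormA A x := seven hA hM x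
          _ = vnormA A ((M * M) x) := by rw [hx, mul_one]
          _ ≤ opNormA' A (M * M) := vnorm_le_opN hA (sa_mul_adjoint hA.1.isSelfAdjoint.adjoint_eq hM) hx
      · exact opN_nonneg _
    calc opNormA' A M ^ 2 ≤ Real.sqrt (opNormA' A (M * M)) ^ 2 :=
          pow_le_pow_left₀ (opN_nonneg M) h1 2
      _ = opNormA' A (M * M) := Real.sq_sqrt (opN_nonneg _)

lemma opN_cube (hA : StrictPos A) {M : H →L[ℂ] H}
    (hM : A * M = ContinuousLinearMap.adjoint M * A) :
    opNormA' A (M ^ 3) = opNormA' A M ^ 3 := by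
  have hsa := hA.1.isSelfAdjoint.adjoint_eq
  have hM2 : A * (M * M) = ContinuousLinearMap.adjoint (M * M) * A := sa_mul_adjoint hsa hM
  have h2 : opNormA' A (M * M) = opNormA' A M ^ 2 := opN_sq hA hM
  have h4 : opNormA' A ((M * M) * (M * M)) = opNormA' A M ^ 4 := by
    rw [opN_sq hA hM2, h2]; ring
  -- submultiplicativity helpers
  have hsub : ∀ (K L : H →L[ℂ] H), (A * K = ContinuousLinearMap.adjoint K * A) →
      (A * L = ContinuousLinearMap.adjoint L * A) →
      opNormA' A (K * L) ≤ opNormA' A K * opNormA' A L := by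
    intro K L hK hL
    apply opN_le _ (mul_nonneg (opN_nonneg K) (opN_nonneg L))
    intro x hx
    calc vnormA A ((K * L) x) = vnormA A (K (L x)) := by rw [ContinuousLinearMap.mul_apply]
      _ ≤ opNormA' A K * vnormA A (L x) := vnorm_le_opN' hA hK _
      _ ≤ opNormA' A K * (opNormA' A L * vnormA A x) :=
          mul_le_mul_of_nonneg_left (vnorm_le_opN' hA hL x) (opN_nonneg K)
      _ = opNormA' A K * opNormA' A L := by rw [hx, mul_one]
  have e3 : M ^ 3 = M * (M * M) := by
    simp [pow_succ, pow_two, mul_assoc]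
  have hup : opNormA' A (M ^ 3) ≤ opNormA' A M ^ 3 := by
    calc opNormA' A (M ^ 3) = opNormA' A (M * (M * M)) := by rw [e3]
      _ ≤ opNormA' A M * opNormA' A (M * M) := hsub M (M * M) hM hM2
      _ = opNormA' A M * opNormA' A M ^ 2 := by rw [h2]
      _ = opNormA' A M ^ 3 := by ring
  have e4 : (M * M) * (M * M) = M ^ 3 * M := by
    simp [pow_succ, pow_two, mul_assoc]
  have hM3 : A * (M ^ 3) = ContinuousLinearMap.adjoint (M ^ 3) * A := sa_pow hM 3
  have hdown : opNormA' A M ^ 4 ≤ opNormA' A (M ^ 3) * opNormA' A M := by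
    calc opNormA' A M ^ 4 = opNormA' A ((M * M) * (M * M)) := h4.symm
      _ = opNormA' A (M ^ 3 * M) := by rw [e4]
      _ ≤ opNormA' A (M ^ 3) * opNormA' A M := hsub _ _ hM3 hM
  rcases eq_or_lt_of_le (opN_nonneg (A := A) M) with h0 | hpos
  · have h30 : opNormA' A (M ^ 3) ≤ 0 := by
      calc opNormA' A (M ^ 3) ≤ opNormA' A M ^ 3 := hup
        _ = 0 := by rw [← h0]; ring
    have := le_antisymm h30 (opN_nonneg _)
    rw [this, ← h0]; ring
  · apply le_antisymm hup
    have hc : opNormA' A M ^ 3 * opNormA' A M ≤ opNormA' A (M ^ 3) * opNormA' A M := by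
      calc opNormA' A M ^ 3 * opNormA' A M = opNormA' A M ^ 4 := by ring
        _ ≤ opNormA' A (M ^ 3) * opNormA' A M := hdown
    exact le_of_mul_le_mul_right hc hpos

end Aux4

section Main
variable {A T S : H →L[ℂ] H}

lemma exists_unit (z : ℂ) :
    ∃ c : ℂ, ‖c‖ = 1 ∧ conj c * z = (‖z‖ : ℂ) := by
  rcases eq_or_ne z 0 with rfl | hz
  · refine ⟨1, by simp, by simp⟩
  · have habs : (‖z‖ : ℂ) ≠ 0 := by
      simp only [ne_eq, Complex.ofReal_eq_zero]
      exact fun h => hz ((norm_eq_zero).1 h)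
    refine ⟨z / (‖z‖ : ℂ), ?_, ?_⟩
    · rw [norm_div, Complex.norm_real, Real.norm_eq_abs, _root_.abs_of_nonneg (norm_nonneg _)]
      exact div_self (fun h => hz (norm_eq_zero.1 h))
    · have e1 : conj (z / (‖z‖ : ℂ)) = conj z / (‖z‖ : ℂ) := by
        rw [map_div₀, Complex.conj_ofReal]
      rw [e1, div_mul_eq_mul_div, ← Complex.normSq_eq_conj_mul_self, div_eq_iff habs]
      rw [Complex.normSq_eq_norm_sq]
      push_cast
      ring

lemma Rc_sa (hsa : ContinuousLinearMap.adjoint A = A)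
    (hAS : A * S = ContinuousLinearMap.adjoint T * A)
    (hAT : A * T = ContinuousLinearMap.adjoint S * A) (c : ℂ) :
    A * (c • T + conj c • S)
      = ContinuousLinearMap.adjoint (c • T + conj c • S) * A := by
  have hadj : ContinuousLinearMap.adjoint (c • T + conj c • S)
      = conj c • ContinuousLinearMap.adjoint T + c • ContinuousLinearMap.adjoint S := by
    simp [← star_eq_adjoint, star_add, star_smul, Complex.star_def]
  rw [hadj, mul_add, add_mul, mul_smul_comm, mul_smul_comm, smul_mul_assoc, smul_mul_assoc,
    hAS, hAT]
  abel

lemma Rc_cube {c : ℂ} (hc1 : c * conj c = 1)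
    (hT3' : T * (T * T) = 0) (hS3' : S * (S * S) = 0) :
    (c • T + conj c • S) ^ 3
      = c • (T * (T * S) + (T * (S * T) + S * (T * T)))
        + conj c • (T * (S * S) + (S * (T * S) + S * (S * T))) := by
  have hc2 : conj c * c = 1 := by rw [mul_comm]; exact hc1
  have hA1 : c * (conj c * conj c) = conj c := by rw [← mul_assoc, hc1, one_mul]
  have hA2 : conj c * (c * c) = c := by rw [← mul_assoc, hc2, one_mul]
  simp only [hA1, hA2, pow_succ, pow_zero, one_mul, add_mul, mul_add, smul_mul_assoc, mul_smul_comm,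
    smul_smul, mul_assoc, hT3', hS3', smul_zero, zero_add, add_zero, hc1, hc2, mul_one,
    one_smul, one_mul, smul_add, hA1, hA2]
  abel

end Main

section Main2
variable {A T S : H →L[ℂ] H}

lemma innA_comb (hsa : ContinuousLinearMap.adjoint A = A) {V W : H →L[ℂ] H}
    (hW : A * W = ContinuousLinearMap.adjoint V * A) (c : ℂ) (x : H) :
    innA A ((c • V + conj c • W) x) x
      = conj c * innA A (V x) x + c * conj (innA A (V x) x) := by
  have hWx : innA A (W x) x = conj (innA A (V x) x) := adj_inn hsa hW x
  simp only [ContinuousLinearMap.add_apply, ContinuousLinearMap.smul_apply, innA_add_left,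
    innA_smul_left, hWx, Complex.conj_conj]

lemma comb_abs_le {c : ℂ} (habs : ‖c‖ = 1) (z : ℂ) :
    ‖conj c * z + c * conj z‖ ≤ 2 * ‖z‖ := by
  calc ‖conj c * z + c * conj z‖
      ≤ ‖conj c * z‖ + ‖c * conj z‖ := norm_add_le _ _
    _ = ‖z‖ + ‖z‖ := by
        simp [norm_mul, Complex.norm_conj, habs]
    _ = 2 * ‖z‖ := by ring

lemma two_ofReal_abs (z : ℂ) : ‖2 * (‖z‖ : ℂ)‖ = 2 * ‖z‖ := by
  rw [norm_mul, Complex.norm_two, Complex.norm_real, Real.norm_eq_abs,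
    _root_.abs_of_nonneg (norm_nonneg _)]

lemma conj_part {c z : ℂ} (hcz : conj c * z = (‖z‖ : ℂ)) :
    c * conj z = (‖z‖ : ℂ) := by
  have h := congrArg conj hcz
  rwa [map_mul, Complex.conj_conj, Complex.conj_ofReal] at h

theorem stmt15 (A T S : H →L[ℂ] H) (hA : StrictPos A) (hS : IsAAdjoint A T S)
    (hT3 : T^3 = 0) :
    (wA A T)^3 = (1/4) * wA A (T^2 * S + S * T^2 + T * S * T) := by
  have hsa : ContinuousLinearMap.adjoint A = A := hA.1.isSelfAdjoint.adjoint_eq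
  have hAS : A * S = ContinuousLinearMap.adjoint T * A := hS
  have hAT : A * T = ContinuousLinearMap.adjoint S * A := by
    have h := congrArg star hAS
    simp only [star_mul, star_eq_adjoint, hsa, adjoint_adjoint] at h
    exact h.symm
  set P : H →L[ℂ] H := T * (T * S) + (T * (S * T) + S * (T * T)) with hPdef
  set Q : H →L[ℂ] H := T * (S * S) + (S * (T * S) + S * (S * T)) with hQdef
  have hT3' : T * (T * T) = 0 := by
    have e : T ^ 3 = T * (T * T) := by simp [pow_succ, pow_two, mul_assoc]
    rw [← e]; exact hT3
  have hAinj : ∀ v : H, A v = 0 → v = 0 := by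
    intro v hv
    by_contra hne
    have h := hA.2 v hne
    rw [show innA A v v = 0 from by simp [innA, hv]] at h
    simp at h
  have h1 : ∀ X : H →L[ℂ] H, A * (S * X) = ContinuousLinearMap.adjoint T * (A * X) := by
    intro X; rw [← mul_assoc, hAS, mul_assoc]
  have h2 : ∀ X : H →L[ℂ] H, A * (T * X) = ContinuousLinearMap.adjoint S * (A * X) := by
    intro X; rw [← mul_assoc, hAT, mul_assoc]
  have hS3' : S * (S * S) = 0 := by
    have hzero : A * (S * (S * S)) = 0 := by
      rw [h1, h1, hAS]
      have e : ContinuousLinearMap.adjoint T * (ContinuousLinearMap.adjoint T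
          * (ContinuousLinearMap.adjoint T * A))
          = ContinuousLinearMap.adjoint (T * (T * T)) * A := by
        simp only [← star_eq_adjoint, star_mul, mul_assoc]
      rw [e, hT3']
      simp [← star_eq_adjoint]
    ext x
    have hx := DFunLike.congr_fun hzero x
    simp only [ContinuousLinearMap.mul_apply, ContinuousLinearMap.zero_apply] at hx ⊢
    exact hAinj _ hx
  have hPQ : A * Q = ContinuousLinearMap.adjoint P * A := by
    rw [hQdef, hPdef]
    simp only [mul_add, h1, h2, hAS, hAT, ← star_eq_adjoint, star_add, star_mul, add_mul,
      mul_assoc]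
    try abel
  have hop : T ^ 2 * S + S * T ^ 2 + T * S * T = P := by
    rw [hPdef]; simp only [pow_two, mul_assoc]; abel
  rw [hop]
  have hβ4 : (0:ℝ) ≤ wA A P / 4 := by
    have := wA_nonneg (A := A) P; linarith
  -- direction 1
  have dir1 : wA A T ^ 3 ≤ wA A P / 4 := by
    set b := (wA A P / 4) ^ ((3:ℝ)⁻¹) with hbdef
    have hb0 : 0 ≤ b := Real.rpow_nonneg hβ4 _
    have hb3 : b ^ (3:ℕ) = wA A P / 4 := by
      rw [hbdef, ← Real.rpow_natCast ((wA A P / 4) ^ ((3:ℝ)⁻¹)) 3, ← Real.rpow_mul hβ4]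
      rw [show (3:ℝ)⁻¹ * ((3:ℕ):ℝ) = 1 by norm_num, Real.rpow_one]
    have hwT : wA A T ≤ b := by
      apply Real.sSup_le _ hb0
      rintro r ⟨x, hx, rfl⟩
      set z := innA A (T x) x with hz_def
      obtain ⟨c, habs, hcz⟩ := exists_unit z
      set Rc := c • T + conj c • S with hRc_def
      have hRcsa := Rc_sa hsa hAS hAT c
      have hc1 : c * conj c = 1 := by
        rw [Complex.mul_conj, Complex.normSq_eq_norm_sq, habs]; norm_num
      have hexp' : Rc ^ 3 = c • P + conj c • Q := by
        rw [hRc_def, hPdef, hQdef]; exact Rc_cube hc1 hT3' hS3'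
      have h2z : innA A (Rc x) x = 2 * (‖z‖ : ℂ) := by
        rw [hRc_def, innA_comb hsa hAS c x, ← hz_def, hcz, conj_part hcz]; ring
      have hle1 : 2 * ‖z‖ ≤ opNormA' A Rc := by
        calc 2 * ‖z‖ = ‖innA A (Rc x) x‖ := by
              rw [h2z, two_ofReal_abs]
          _ ≤ vnormA A (Rc x) * vnormA A x := innA_abs_le hA _ _
          _ = vnormA A (Rc x) := by rw [hx, mul_one]
          _ ≤ opNormA' A Rc := vnorm_le_opN hA hRcsa hx
      have hcube : opNormA' A Rc ^ 3 ≤ 2 * wA A P := by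
        rw [← opN_cube hA hRcsa, ← wA_eq_opN hA (sa_pow hRcsa 3)]
        apply wA_le _ (by linarith [wA_nonneg (A := A) P])
        intro y hy
        rw [hexp']
        calc ‖innA A ((c • P + conj c • Q) y) y‖
            = ‖conj c * innA A (P y) y + c * conj (innA A (P y) y)‖ := by
              rw [innA_comb hsa hPQ c y]
          _ ≤ 2 * ‖innA A (P y) y‖ := comb_abs_le habs _
          _ ≤ 2 * wA A P := by linarith [abs_le_wA hA hPQ hy]
      have h8 : (2 * ‖z‖) ^ 3 ≤ 2 * wA A P := by
        calc (2 * ‖z‖) ^ 3 ≤ opNormA' A Rc ^ 3 :=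
              pow_le_pow_left₀ (by positivity) hle1 3
          _ ≤ 2 * wA A P := hcube
      have h9 : ‖z‖ ^ 3 ≤ b ^ 3 := by
        rw [hb3]
        nlinarith [h8]
      exact le_of_pow_le_pow_left₀ (by norm_num : (3:ℕ) ≠ 0) hb0 h9
    calc wA A T ^ 3 ≤ b ^ 3 := pow_le_pow_left₀ (wA_nonneg T) hwT 3
      _ = wA A P / 4 := hb3
  -- direction 2
  have dir2 : wA A P ≤ 4 * wA A T ^ 3 := by
    have h4nn : (0:ℝ) ≤ 4 * wA A T ^ 3 := by
      have := wA_nonneg (A := A) T; positivity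
    apply Real.sSup_le _ h4nn
    rintro r ⟨x, hx, rfl⟩
    set ζ := innA A (P x) x with hζ_def
    obtain ⟨c, habs, hcz⟩ := exists_unit ζ
    set Rc := c • T + conj c • S with hRc_def
    have hRcsa := Rc_sa hsa hAS hAT c
    have hc1 : c * conj c = 1 := by
      rw [Complex.mul_conj, Complex.normSq_eq_norm_sq, habs]; norm_num
    have hexp' : Rc ^ 3 = c • P + conj c • Q := by
      rw [hRc_def, hPdef, hQdef]; exact Rc_cube hc1 hT3' hS3'
    have hwRc : wA A Rc ≤ 2 * wA A T := by
      apply wA_le _ (by linarith [wA_nonneg (A := A) T])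
      intro y hy
      calc ‖innA A (Rc y) y‖
          = ‖conj c * innA A (T y) y + c * conj (innA A (T y) y)‖ := by
            rw [hRc_def, innA_comb hsa hAS c y]
        _ ≤ 2 * ‖innA A (T y) y‖ := comb_abs_le habs _
        _ ≤ 2 * wA A T := by linarith [abs_le_wA hA hAS hy]
    have hNRc : opNormA' A Rc ≤ 2 * wA A T := by
      rw [← wA_eq_opN hA hRcsa]; exact hwRc
    have h2ζ : innA A ((Rc ^ 3) x) x = 2 * (‖ζ‖ : ℂ) := by
      rw [hexp', innA_comb hsa hPQ c x, ← hζ_def, hcz, conj_part hcz]; ring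
    have hfin : 2 * ‖ζ‖ ≤ (2 * wA A T) ^ 3 := by
      calc 2 * ‖ζ‖ = ‖innA A ((Rc ^ 3) x) x‖ := by
            rw [h2ζ, two_ofReal_abs]
        _ ≤ vnormA A ((Rc ^ 3) x) * vnormA A x := innA_abs_le hA _ _
        _ = vnormA A ((Rc ^ 3) x) := by rw [hx, mul_one]
        _ ≤ opNormA' A (Rc ^ 3) := vnorm_le_opN hA (sa_pow hRcsa 3) hx
        _ = opNormA' A Rc ^ 3 := opN_cube hA hRcsa
        _ ≤ (2 * wA A T) ^ 3 := pow_le_pow_left₀ (opN_nonneg _) hNRc 3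
    nlinarith [hfin]
  linarith [dir1, dir2]

end Main2
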